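/- Let β ∈ [0,∞), f ∈ H, let (γ_i)_{i≥0} be a sequence in (0,1], and let (x_i)_{i≥1} be a sequence in Ω such that for every i ≥ 0 and every z ∈ Ω: γ_i · |(f − I_{X_i} f)(z)|^β · P_{X_i}(z)^{1−β} ≤ |(f − I_{X_i} f)(x_{i+1})|^β · P_{X_i}(x_{i+1})^{1−β}. If for some n ≥ 1 and ε > 0 the closed absolutely convex hull acx(Φ(Ω)) admits an (n, ε)-cover, then min_{n+1 ≤ i ≤ 2n} ‖r_i‖_∞ ≤ γ̄^{−1} · (√5 · n^{(1−β)/2} · ε)^{1/max(1,β)} · ‖r_{n+1}‖_H, where γ̄ := (∏_{i=n+1}^{2n} γ_i)^{1/n}. -/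

import Mathlib

open scoped RealInnerProductSpace

variable {H : Type*} [NormedAddCommGroup H] [InnerProductSpace ℝ H] {Ω : Type*}

/-- The kernel interpolant `I_X f`: the orthogonal projection of `f` onto
`V(X) = span {Φ(x) : x ∈ X}`. -/
noncomputable def interp (Φ : Ω → H) (X : Finset Ω) (f : H) : H :=
  haveI : FiniteDimensional ℝ (Submodule.span ℝ (Φ '' (X : Set Ω))) :=
    FiniteDimensional.span_of_finite ℝ (X.finite_toSet.image Φ)
  (Submodule.orthogonalProjectionOnto (Submodule.span ℝ (Φ '' (X : Set Ω))) f : H)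

/-- The power function `P_X(z) = ‖Φ(z) − Π_{V(X)} Φ(z)‖`. -/
noncomputable def powerFun (Φ : Ω → H) (X : Finset Ω) (z : Ω) : ℝ :=
  ‖Φ z - interp Φ X (Φ z)‖

/-- The sup norm `‖g‖_∞ = sup_{x ∈ Ω} |g(x)|`, where `g(x) = ⟪g, Φ(x)⟫`. -/
noncomputable def supNorm (Φ : Ω → H) (g : H) : ℝ := ⨆ x : Ω, |⟪g, Φ x⟫|

/-- `X_i = {x_1, …, x_i}` (so `X_0 = ∅`). -/
noncomputable def Xset (x : ℕ → Ω) (i : ℕ) : Finset Ω := by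
  classical exact (Finset.Icc 1 i).image x

/-- The closed absolutely convex (symmetric convex) hull of `K`. -/
def acx (K : Set H) : Set H :=
  closure {y : H | ∃ (m : ℕ) (c : Fin m → ℝ) (g : Fin m → H),
    (∀ j, g j ∈ K) ∧ (∑ j, |c j|) ≤ 1 ∧ y = ∑ j, c j • g j}

/-- `S` admits an `(n, ε)`-cover: it can be covered by at most `2^n` closed balls of
radius `ε`. -/
def HasCover (S : Set H) (n : ℕ) (ε : ℝ) : Prop :=
  ∃ (q : ℕ) (y : Fin q → H), q ≤ 2 ^ n ∧ S ⊆ ⋃ j, Metric.closedBall (y j) ε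


/-! ## Auxiliary lemmas -/

open MeasureTheory Real
open scoped ENNReal

/-! ### Basic facts about `interp` -/

noncomputable def Vsub (Φ : Ω → H) (X : Finset Ω) : Submodule ℝ H :=
  Submodule.span ℝ (Φ '' (X : Set Ω))

instance (Φ : Ω → H) (X : Finset Ω) : FiniteDimensional ℝ (Vsub Φ X) :=
  FiniteDimensional.span_of_finite ℝ (X.finite_toSet.image Φ)

lemma interp_eq (Φ : Ω → H) (X : Finset Ω) (f : H) :
    interp Φ X f = (Submodule.orthogonalProjectionOnto (Vsub Φ X) f : H) := rfl

lemma interp_mem (Φ : Ω → H) (X : Finset Ω) (f : H) : interp Φ X f ∈ Vsub Φ X := by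
  rw [interp_eq]; exact (Submodule.orthogonalProjectionOnto (Vsub Φ X) f).2

lemma resid_inner_eq_zero (Φ : Ω → H) (X : Finset Ω) (f : H) {v : H} (hv : v ∈ Vsub Φ X) :
    ⟪f - interp Φ X f, v⟫ = 0 := by
  rw [interp_eq]
  rw [real_inner_comm]
  exact (Submodule.sub_starProjection_mem_orthogonal (K := Vsub Φ X) f) v hv

lemma resid_norm_le (Φ : Ω → H) (X : Finset Ω) (f : H) {w : H} (hw : w ∈ Vsub Φ X) :
    ‖f - interp Φ X f‖ ≤ ‖f - w‖ := by
  have hperp : ⟪f - interp Φ X f, interp Φ X f - w⟫ = 0 :=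
    resid_inner_eq_zero Φ X f (Submodule.sub_mem _ (interp_mem Φ X f) hw)
  have : ‖f - w‖ ^ 2 = ‖f - interp Φ X f‖ ^ 2 + ‖interp Φ X f - w‖ ^ 2 := by
    have hs : f - w = (f - interp Φ X f) + (interp Φ X f - w) := by abel
    rw [hs, norm_add_sq_real, hperp]; ring
  nlinarith [norm_nonneg (f - w), norm_nonneg (f - interp Φ X f), norm_nonneg (interp Φ X f - w)]

lemma powerFun_le_one (Φ : Ω → H) (hΦ : ∀ z : Ω, ‖Φ z‖ ≤ 1) (X : Finset Ω) (z : Ω) :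
    powerFun Φ X z ≤ 1 := by
  have := resid_norm_le Φ X (Φ z) (Submodule.zero_mem (Vsub Φ X))
  simpa [powerFun] using this.trans (by simpa using hΦ z)

lemma powerFun_nonneg (Φ : Ω → H) (X : Finset Ω) (z : Ω) : 0 ≤ powerFun Φ X z :=
  norm_nonneg _

lemma abs_resid_apply_le (Φ : Ω → H) (X : Finset Ω) (f : H) (z : Ω) :
    |⟪f - interp Φ X f, Φ z⟫| ≤ powerFun Φ X z * ‖f - interp Φ X f‖ := by
  have h1 : ⟪f - interp Φ X f, Φ z⟫ = ⟪f - interp Φ X f, Φ z - interp Φ X (Φ z)⟫ := by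
    rw [inner_sub_right, resid_inner_eq_zero Φ X f (interp_mem Φ X (Φ z)), sub_zero]
  rw [h1]
  calc |⟪f - interp Φ X f, Φ z - interp Φ X (Φ z)⟫|
      ≤ ‖f - interp Φ X f‖ * ‖Φ z - interp Φ X (Φ z)‖ := abs_real_inner_le_norm _ _
    _ = powerFun Φ X z * ‖f - interp Φ X f‖ := by rw [powerFun]; ring

lemma supNorm_le (Φ : Ω → H) (hΦ : ∀ z : Ω, ‖Φ z‖ ≤ 1) [Nonempty Ω] (g : H) {c : ℝ}
    (hc : ∀ z : Ω, |⟪g, Φ z⟫| ≤ c) : supNorm Φ g ≤ c := ciSup_le hc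

lemma supNorm_bddAbove (Φ : Ω → H) (hΦ : ∀ z : Ω, ‖Φ z‖ ≤ 1) (g : H) :
    BddAbove (Set.range fun z : Ω => |⟪g, Φ z⟫|) := by
  refine ⟨‖g‖, ?_⟩
  rintro - ⟨z, rfl⟩
  calc |⟪g, Φ z⟫| ≤ ‖g‖ * ‖Φ z‖ := abs_real_inner_le_norm _ _
    _ ≤ ‖g‖ * 1 := by nlinarith [norm_nonneg g, hΦ z]
    _ = ‖g‖ := mul_one _

lemma le_supNorm (Φ : Ω → H) (hΦ : ∀ z : Ω, ‖Φ z‖ ≤ 1) (g : H) (z : Ω) :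
    |⟪g, Φ z⟫| ≤ supNorm Φ g :=
  le_ciSup (supNorm_bddAbove Φ hΦ g) z

lemma supNorm_nonneg (Φ : Ω → H) (hΦ : ∀ z : Ω, ‖Φ z‖ ≤ 1) [Nonempty Ω] (g : H) :
    0 ≤ supNorm Φ g :=
  le_trans (abs_nonneg _) (le_supNorm Φ hΦ g (Classical.arbitrary Ω))

lemma Xset_mono (x : ℕ → Ω) {i j : ℕ} (h : i ≤ j) : Xset x i ⊆ Xset x j := by
  classical
  unfold Xset
  exact Finset.image_subset_image (Finset.Icc_subset_Icc_right h)

lemma Vsub_mono (Φ : Ω → H) {X Y : Finset Ω} (h : X ⊆ Y) : Vsub Φ X ≤ Vsub Φ Y :=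
  Submodule.span_mono (Set.image_mono (by exact_mod_cast h))

lemma mem_Xset (x : ℕ → Ω) {i j : ℕ} (h1 : 1 ≤ i) (h2 : i ≤ j) : x i ∈ Xset x j := by
  classical
  unfold Xset
  exact Finset.mem_image.mpr ⟨i, Finset.mem_Icc.mpr ⟨h1, h2⟩, rfl⟩

lemma Phi_mem_Vsub (Φ : Ω → H) {X : Finset Ω} {z : Ω} (h : z ∈ X) : Φ z ∈ Vsub Φ X :=
  Submodule.subset_span ⟨z, by exact_mod_cast h, rfl⟩

lemma resid_norm_anti (Φ : Ω → H) (x : ℕ → Ω) (f : H) {i j : ℕ} (h : i ≤ j) :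
    ‖f - interp Φ (Xset x j) f‖ ≤ ‖f - interp Φ (Xset x i) f‖ :=
  resid_norm_le Φ (Xset x j) f (Vsub_mono Φ (Xset_mono x h) (interp_mem Φ (Xset x i) f))


section RealAux

lemma bernoulli_aux (k : ℕ) (hk : 1 ≤ k) :
    3 * ((5:ℝ) * k) ^ k ≤ (5 * ((k:ℝ) + 2)) ^ k := by
  have hk0 : (k:ℝ) ≠ 0 := Nat.cast_ne_zero.mpr (by omega)
  have hb : (1:ℝ) + k * (2 / k) ≤ (1 + 2 / k) ^ k := by
    have h0 : (0:ℝ) ≤ 2 / k := by positivity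
    exact one_add_mul_le_pow (by linarith) k
  have hb' : (3:ℝ) ≤ (1 + 2 / k) ^ k := by
    rw [mul_div_cancel₀ (2:ℝ) hk0] at hb; linarith
  have key : ((5:ℝ) * k) ^ k * (1 + 2 / k) ^ k = (5 * ((k:ℝ) + 2)) ^ k := by
    rw [← mul_pow]
    congr 1
    field_simp
  calc 3 * ((5:ℝ) * k) ^ k ≤ ((5:ℝ) * k) ^ k * (1 + 2 / k) ^ k := by
        nlinarith [pow_nonneg (by positivity : (0:ℝ) ≤ 5 * k) k]
    _ = _ := key

lemma gamma_step (k : ℕ) (hk1 : 1 ≤ k)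
    (IH : ((k.factorial : ℝ)) ^ 2 * π ^ k ≤ (5 * k) ^ k * Real.Gamma ((k:ℝ) / 2 + 1) ^ 2) :
    (((k+2).factorial : ℝ)) ^ 2 * π ^ (k+2)
      ≤ (5 * ((k:ℝ)+2)) ^ (k+2) * Real.Gamma (((k:ℝ)+2) / 2 + 1) ^ 2 := by
  have hΓpos : 0 < Real.Gamma ((k:ℝ) / 2 + 1) := Real.Gamma_pos_of_pos (by positivity)
  have hΓ : Real.Gamma (((k:ℝ) + 2) / 2 + 1) = ((k:ℝ)/2 + 1) * Real.Gamma ((k:ℝ)/2 + 1) := by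
    have h : ((k:ℝ) + 2) / 2 + 1 = ((k:ℝ)/2 + 1) + 1 := by ring
    rw [h, Real.Gamma_add_one (by positivity)]
  have hfac : (((k+2).factorial) : ℝ) = ((k:ℝ) + 2) * ((k:ℝ) + 1) * (k.factorial : ℝ) := by
    show (((k+1)+1).factorial : ℝ) = _
    rw [Nat.factorial_succ, Nat.factorial_succ]
    push_cast
    ring
  rw [hfac, hΓ]
  have hber := bernoulli_aux k hk1
  have hπ2 : π^2 ≤ 16 := by nlinarith [Real.pi_le_four, Real.pi_pos]
  have hπ0 : 0 < π := Real.pi_pos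
  have e1 : (((k:ℝ) + 2) * ((k:ℝ) + 1) * (k.factorial:ℝ)) ^ 2 * π ^ (k + 2)
      = (((k:ℝ)+2)*((k:ℝ)+1))^2 * π^2 * ((k.factorial:ℝ)^2 * π ^ k) := by ring
  have e2 : ((5:ℝ) * ((k:ℝ)+2)) ^ (k+2) * (((k:ℝ)/2 + 1) * Real.Gamma ((k:ℝ)/2+1)) ^ 2
      = (5 * ((k:ℝ)+2))^2 * ((k:ℝ)/2+1)^2 * ((5*((k:ℝ)+2))^k * Real.Gamma ((k:ℝ)/2+1)^2) := by
    ring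
  rw [e1, e2]
  have step2 : ((5:ℝ)*(k:ℝ))^k * Real.Gamma ((k:ℝ)/2+1)^2
      ≤ (1/3) * ((5*((k:ℝ)+2))^k * Real.Gamma ((k:ℝ)/2+1)^2) := by
    have := mul_le_mul_of_nonneg_right hber (sq_nonneg (Real.Gamma ((k:ℝ)/2+1)))
    linarith
  have hcoef : (((k:ℝ)+2)*((k:ℝ)+1))^2 * π^2 ≤ (5 * ((k:ℝ)+2))^2 * ((k:ℝ)/2+1)^2 * 3 := by
    have hk0 : (0:ℝ) ≤ (k:ℝ) := Nat.cast_nonneg k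
    have h1 : (((k:ℝ)+2)*((k:ℝ)+1))^2 ≤ (((k:ℝ)+2)*((k:ℝ)+2))^2 := by nlinarith
    have h2 : (5 * ((k:ℝ)+2))^2 * ((k:ℝ)/2+1)^2 * 3 = (75/4) * (((k:ℝ)+2)*((k:ℝ)+2))^2 := by
      ring
    rw [h2]
    calc (((k:ℝ)+2)*((k:ℝ)+1))^2 * π^2
        ≤ (((k:ℝ)+2)*((k:ℝ)+1))^2 * 16 := mul_le_mul_of_nonneg_left hπ2 (sq_nonneg _)
      _ ≤ (((k:ℝ)+2)*((k:ℝ)+2))^2 * 16 := mul_le_mul_of_nonneg_right h1 (by norm_num)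
      _ ≤ (75/4) * (((k:ℝ)+2)*((k:ℝ)+2))^2 := by
          have := sq_nonneg (((k:ℝ)+2)*((k:ℝ)+2))
          linarith
  have hA : (0:ℝ) ≤ (((k:ℝ)+2)*((k:ℝ)+1))^2 * π^2 := by positivity
  have hIH' : (k.factorial:ℝ)^2 * π ^ k
      ≤ (1/3) * ((5*((k:ℝ)+2))^k * Real.Gamma ((k:ℝ)/2+1)^2) := by
    refine le_trans ?_ step2
    exact_mod_cast IH
  calc (((k:ℝ)+2)*((k:ℝ)+1))^2 * π^2 * ((k.factorial:ℝ)^2 * π ^ k)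
      ≤ (((k:ℝ)+2)*((k:ℝ)+1))^2 * π^2
          * ((1/3) * ((5*((k:ℝ)+2))^k * Real.Gamma ((k:ℝ)/2+1)^2)) :=
        mul_le_mul_of_nonneg_left hIH' hA
    _ ≤ (5 * ((k:ℝ)+2))^2 * ((k:ℝ)/2+1)^2 * 3
          * ((1/3) * ((5*((k:ℝ)+2))^k * Real.Gamma ((k:ℝ)/2+1)^2)) :=
        mul_le_mul_of_nonneg_right hcoef (by positivity)
    _ = (5 * ((k:ℝ)+2))^2 * ((k:ℝ)/2+1)^2 * ((5*((k:ℝ)+2))^k * Real.Gamma ((k:ℝ)/2+1)^2) := by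
        ring

lemma gamma_sq_ineq : ∀ n : ℕ, 1 ≤ n →
    ((n.factorial : ℝ)) ^ 2 * π ^ n ≤ (5 * n) ^ n * Real.Gamma ((n:ℝ) / 2 + 1) ^ 2 := by
  have base1 : ((Nat.factorial 1 : ℝ)) ^ 2 * π ^ 1
      ≤ (5 * (1:ℕ)) ^ 1 * Real.Gamma (((1:ℕ):ℝ) / 2 + 1) ^ 2 := by
    have h32 : Real.Gamma (((1:ℕ):ℝ)/2 + 1) = Real.sqrt π / 2 := by
      have : ((1:ℕ):ℝ)/2 + 1 = (1/2 : ℝ) + 1 := by norm_num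
      rw [this, Real.Gamma_add_one (by norm_num), Real.Gamma_one_half_eq]
      ring
    rw [h32]
    have h : (Real.sqrt π / 2) ^ 2 = π / 4 := by
      rw [div_pow, Real.sq_sqrt Real.pi_nonneg]; norm_num
    rw [h]
    simp only [Nat.factorial_one, Nat.cast_one, one_pow, pow_one]
    push_cast
    nlinarith [Real.pi_pos]
  have base2 : ((Nat.factorial 2 : ℝ)) ^ 2 * π ^ 2
      ≤ (5 * (2:ℕ)) ^ 2 * Real.Gamma (((2:ℕ):ℝ) / 2 + 1) ^ 2 := by
    have h : ((2:ℕ):ℝ) / 2 + 1 = 2 := by norm_num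
    rw [h, Real.Gamma_two]
    have hf : (Nat.factorial 2 : ℝ) = 2 := by norm_num [Nat.factorial]
    rw [hf]
    push_cast
    nlinarith [Real.pi_le_four, Real.pi_pos]
  intro n
  induction n using Nat.strong_induction_on with
  | _ n ih =>
    rcases n with _ | _ | _ | m
    · omega
    · intro _; exact base1
    · intro _; exact base2
    · intro _
      have IH := ih (m+1) (by omega) (by omega)
      have := gamma_step (m+1) (by omega) (by exact_mod_cast IH)
      have hc : (((m+1:ℕ):ℝ) + 2) = ((m+1+2 : ℕ) : ℝ) := by push_cast; ring
      rw [hc] at this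
      exact_mod_cast this

lemma gamma_ineq (n : ℕ) (hn : 1 ≤ n) :
    (n.factorial : ℝ) * Real.sqrt π ^ n
      ≤ (Real.sqrt 5 * Real.sqrt n) ^ n * Real.Gamma ((n:ℝ) / 2 + 1) := by
  have hΓ : 0 < Real.Gamma ((n:ℝ)/2 + 1) := Real.Gamma_pos_of_pos (by positivity)
  have hL : 0 ≤ (n.factorial : ℝ) * Real.sqrt π ^ n := by positivity
  have hR : 0 ≤ (Real.sqrt 5 * Real.sqrt n) ^ n * Real.Gamma ((n:ℝ)/2 + 1) := by positivity
  have hsq : ((n.factorial : ℝ) * Real.sqrt π ^ n) ^ 2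
      ≤ ((Real.sqrt 5 * Real.sqrt n) ^ n * Real.Gamma ((n:ℝ)/2 + 1)) ^ 2 := by
    have e1 : ((n.factorial : ℝ) * Real.sqrt π ^ n) ^ 2
        = (n.factorial : ℝ)^2 * (Real.sqrt π ^ 2) ^ n := by ring
    have e2 : ((Real.sqrt 5 * Real.sqrt n) ^ n * Real.Gamma ((n:ℝ)/2 + 1)) ^ 2
        = ((Real.sqrt 5 ^ 2) * (Real.sqrt n ^ 2)) ^ n * Real.Gamma ((n:ℝ)/2 + 1)^2 := by ring
    rw [e1, e2, Real.sq_sqrt Real.pi_nonneg, Real.sq_sqrt (by norm_num : (0:ℝ) ≤ 5),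
      Real.sq_sqrt (Nat.cast_nonneg n)]
    exact_mod_cast gamma_sq_ineq n hn
  nlinarith [hsq, hL, hR]

lemma volume_l1ball (n : ℕ) (hn : 1 ≤ n) :
    volume {c : EuclideanSpace ℝ (Fin n) | ∑ k, |c k| ≤ 1}
      = ENNReal.ofReal (2 ^ n / n.factorial) := by
  have : Nonempty (Fin n) := ⟨⟨0, by omega⟩⟩
  have hmp := EuclideanSpace.volume_preserving_symm_measurableEquiv_toLp (Fin n)
  have hset : {c : EuclideanSpace ℝ (Fin n) | ∑ k, |c k| ≤ 1}
      = (MeasurableEquiv.toLp 2 (Fin n → ℝ)).symm ⁻¹' {x : Fin n → ℝ | ∑ k, |x k| ≤ 1} := rfl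
  have hms : MeasurableSet {x : Fin n → ℝ | ∑ k, |x k| ≤ 1} := by
    have : Continuous fun x : Fin n → ℝ => ∑ k, |x k| := by
      exact continuous_finset_sum _ fun k _ => (continuous_apply k).abs
    exact (isClosed_le this continuous_const).measurableSet
  rw [hset, hmp.measure_preimage hms.nullMeasurableSet]
  have h2 : {x : Fin n → ℝ | ∑ k, |x k| ≤ 1}
      = {x : Fin n → ℝ | (∑ k, |x k| ^ (1:ℝ)) ^ (1/(1:ℝ)) ≤ 1} := by
    ext x; simp [Real.rpow_one]
  rw [h2, MeasureTheory.volume_sum_rpow_le (Fin n) (le_refl (1:ℝ)) 1]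
  have hΓ2 : Real.Gamma (1/(1:ℝ) + 1) = 1 := by
    norm_num [Real.Gamma_two]
  have hΓn : Real.Gamma ((Fintype.card (Fin n) : ℝ) / 1 + 1) = (n.factorial : ℝ) := by
    rw [Fintype.card_fin]
    norm_num [Real.Gamma_nat_eq_factorial]
  rw [hΓ2, hΓn, Fintype.card_fin]
  norm_num

noncomputable def coordMap {n : ℕ} (e : Fin n → H) : H →ₗ[ℝ] EuclideanSpace ℝ (Fin n) where
  toFun h := WithLp.toLp 2 (fun k => ⟪h, e k⟫)
  map_add' a b := by ext k; exact inner_add_left a b (e k)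
  map_smul' c a := by
    ext k
    simp only [inner_smul_left, RingHom.id_apply, RCLike.conj_to_real]
    rfl

noncomputable def comboMap {n : ℕ} (φ : Fin n → H) : EuclideanSpace ℝ (Fin n) →ₗ[ℝ] H where
  toFun c := ∑ k, c k • φ k
  map_add' a b := by
    simp only []
    rw [← Finset.sum_add_distrib]
    refine Finset.sum_congr rfl fun k _ => ?_
    have : (a + b) k = a k + b k := rfl
    rw [this, add_smul]
  map_smul' c a := by
    simp only [RingHom.id_apply]
    rw [Finset.smul_sum]
    refine Finset.sum_congr rfl fun k _ => ?_
    have : (c • a) k = c * a k := rfl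
    rw [this, smul_smul]

lemma coordMap_norm_le {n : ℕ} {e : Fin n → H} (he : Orthonormal ℝ e) (h : H) :
    ‖coordMap e h‖ ≤ ‖h‖ := by
  have hb : ∑ k : Fin n, ⟪e k, h⟫ ^ 2 ≤ ‖h‖ ^ 2 := by
    have := he.sum_inner_products_le (𝕜 := ℝ) (s := Finset.univ) h
    simpa [Real.norm_eq_abs, sq_abs] using this
  have hnorm : ‖coordMap e h‖ = Real.sqrt (∑ k : Fin n, ⟪h, e k⟫ ^ 2) := by
    rw [EuclideanSpace.norm_eq]
    congr 1
    refine Finset.sum_congr rfl fun k _ => ?_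
    rw [Real.norm_eq_abs, sq_abs]
    rfl
  rw [hnorm]
  have : (∑ k : Fin n, ⟪h, e k⟫ ^ 2) = ∑ k : Fin n, ⟪e k, h⟫ ^ 2 := by
    refine Finset.sum_congr rfl fun k _ => by rw [real_inner_comm]
  rw [this]
  calc Real.sqrt (∑ k : Fin n, ⟪e k, h⟫ ^ 2) ≤ Real.sqrt (‖h‖ ^ 2) := Real.sqrt_le_sqrt hb
    _ = ‖h‖ := Real.sqrt_sq (norm_nonneg h)

lemma det_triangular {n : ℕ} (φ e : Fin n → H) (p : Fin n → ℝ)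
    (hdiag : ∀ k, ⟪φ k, e k⟫ = p k)
    (htri : ∀ j k : Fin n, j < k → ⟪φ j, e k⟫ = 0) :
    LinearMap.det ((coordMap e).comp (comboMap φ)) = ∏ k, p k := by
  classical
  set b := PiLp.basisFun 2 ℝ (Fin n) with hb
  set M := (coordMap e).comp (comboMap φ) with hM
  have hmat : ∀ i j, LinearMap.toMatrix b b M i j = ⟪φ j, e i⟫ := by
    intro i j
    rw [LinearMap.toMatrix_apply]
    have hbj : ∀ k, (b j) k = if j = k then (1:ℝ) else 0 := by
      intro k
      rw [hb, PiLp.basisFun_apply]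
      by_cases h : j = k <;> simp [h, EuclideanSpace.single_apply]
    have hMbj : M (b j) = coordMap e (φ j) := by
      rw [hM, LinearMap.comp_apply]
      congr 1
      show ∑ k, (b j) k • φ k = φ j
      rw [Finset.sum_eq_single j]
      · rw [hbj j]; simp
      · intro k _ hk; rw [hbj k]; simp [Ne.symm hk]
      · intro hj; exact absurd (Finset.mem_univ j) hj
    rw [hMbj]
    have : (b.repr (coordMap e (φ j))) i = (coordMap e (φ j)) i := by
      rw [hb, PiLp.basisFun_repr]
    rw [this]
    rfl
  rw [← LinearMap.det_toMatrix b M]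
  have htri' : (LinearMap.toMatrix b b M).BlockTriangular id := by
    intro i j hij
    rw [hmat i j, htri j i hij]
  rw [Matrix.det_of_upperTriangular htri']
  exact Finset.prod_congr rfl fun i _ => by rw [hmat i i, hdiag i]


lemma core_step {β γi riz Pz Ri pi A R : ℝ} (hβ : 0 ≤ β)
    (hγ0 : 0 < γi) (hγ1 : γi ≤ 1)
    (hriz : 0 ≤ riz) (hPz1 : Pz ≤ 1) (hrP : riz ≤ Pz * Ri)
    (hRi0 : 0 ≤ Ri) (hRi : Ri ≤ R)
    (hA : 0 ≤ A) (hpi : 0 < pi)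
    (hx : γi * riz ^ β * Pz ^ (1 - β) ≤ (pi * A) ^ β * pi ^ (1 - β)) :
    riz ≤ γi⁻¹ * (pi ^ (1 / max 1 β) * (A ^ (β / max 1 β) * R ^ (1 - β / max 1 β))) := by
  have hR0 : 0 ≤ R := hRi0.trans hRi
  have hγinv : 1 ≤ γi⁻¹ := (one_le_inv_iff₀).mpr ⟨hγ0, hγ1⟩
  have hrhs_eq : (pi * A) ^ β * pi ^ (1 - β) = pi * A ^ β := by
    have hb1 : β + (1 - β) = 1 := by ring
    rw [Real.mul_rpow hpi.le hA, mul_right_comm, ← Real.rpow_add hpi, hb1, Real.rpow_one]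
  rw [hrhs_eq] at hx
  rcases eq_or_lt_of_le hriz with h0 | hrizpos
  · refine le_trans h0.symm.le ?_
    · positivity
  have hPz0 : 0 < Pz := by nlinarith
  have hRipos : 0 < Ri := by nlinarith
  have hRpos : 0 < R := lt_of_lt_of_le hRipos hRi
  rcases le_or_gt β 1 with hβ1 | hβ1
  · -- case β ≤ 1
    have hμ : max 1 β = 1 := max_eq_left hβ1
    rw [hμ]
    have e1 : riz = riz ^ β * riz ^ (1 - β) := by
      rw [← Real.rpow_add hrizpos]
      norm_num
    have e2 : riz ^ (1 - β) ≤ Pz ^ (1 - β) * R ^ (1 - β) := by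
      rw [← Real.mul_rpow hPz0.le hR0]
      refine Real.rpow_le_rpow hriz ?_ (by linarith)
      calc riz ≤ Pz * Ri := hrP
        _ ≤ Pz * R := mul_le_mul_of_nonneg_left hRi hPz0.le
    have key : γi * riz ≤ pi * A ^ β * R ^ (1 - β) := by
      calc γi * riz = γi * (riz ^ β * riz ^ (1 - β)) := by rw [← e1]
        _ ≤ γi * (riz ^ β * (Pz ^ (1 - β) * R ^ (1 - β))) := by
            refine mul_le_mul_of_nonneg_left ?_ hγ0.le
            exact mul_le_mul_of_nonneg_left e2 (Real.rpow_nonneg hriz β)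
        _ = (γi * riz ^ β * Pz ^ (1 - β)) * R ^ (1 - β) := by ring
        _ ≤ (pi * A ^ β) * R ^ (1 - β) :=
            mul_le_mul_of_nonneg_right hx (Real.rpow_nonneg hR0 _)
    calc riz = γi⁻¹ * (γi * riz) := by
          rw [← mul_assoc, inv_mul_cancel₀ hγ0.ne', one_mul]
      _ ≤ γi⁻¹ * (pi * A ^ β * R ^ (1 - β)) :=
          mul_le_mul_of_nonneg_left key (by positivity)
      _ = γi⁻¹ * (pi ^ ((1:ℝ) / 1) * (A ^ (β / 1) * R ^ (1 - β / 1))) := by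
          rw [one_div_one, div_one, Real.rpow_one]
          ring
  · -- case 1 < β
    have hμ : max 1 β = β := max_eq_right hβ1.le
    have hβ0 : (0:ℝ) < β := lt_trans one_pos hβ1
    rw [hμ, div_self hβ0.ne', sub_self, Real.rpow_one, Real.rpow_zero, mul_one]
    have hPz1β : 1 ≤ Pz ^ (1 - β) :=
      Real.one_le_rpow_of_pos_of_le_one_of_nonpos hPz0 hPz1 (by linarith)
    have h2 : γi * riz ^ β ≤ pi * A ^ β := by
      calc γi * riz ^ β = γi * riz ^ β * 1 := by ring
        _ ≤ γi * riz ^ β * Pz ^ (1 - β) := by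
            refine mul_le_mul_of_nonneg_left hPz1β (by positivity)
        _ ≤ pi * A ^ β := hx
    have h3 : riz ^ β ≤ γi⁻¹ * (pi * A ^ β) := by
      calc riz ^ β = γi⁻¹ * (γi * riz ^ β) := by
            rw [← mul_assoc, inv_mul_cancel₀ hγ0.ne', one_mul]
        _ ≤ γi⁻¹ * (pi * A ^ β) := mul_le_mul_of_nonneg_left h2 (by positivity)
    have h4 : riz ≤ (γi⁻¹ * (pi * A ^ β)) ^ (1/β) := by
      have e : riz = (riz ^ β) ^ (1/β) := by
        rw [← Real.rpow_mul hriz, mul_one_div, div_self hβ0.ne', Real.rpow_one]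
      rw [e]
      exact Real.rpow_le_rpow (by positivity) h3 (by positivity)
    have h5 : (γi⁻¹ * (pi * A ^ β)) ^ (1/β)
        = (γi⁻¹) ^ (1/β) * (pi ^ (1/β) * A) := by
      rw [Real.mul_rpow (by positivity) (by positivity),
        Real.mul_rpow hpi.le (by positivity), ← Real.rpow_mul hA]
      rw [mul_one_div, div_self hβ0.ne', Real.rpow_one]
    have h6 : (γi⁻¹) ^ (1/β) ≤ γi⁻¹ := by
      nth_rewrite 2 [← Real.rpow_one γi⁻¹]
      refine Real.rpow_le_rpow_of_exponent_le hγinv ?_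
      rw [div_le_one hβ0]
      linarith
    calc riz ≤ (γi⁻¹ * (pi * A ^ β)) ^ (1/β) := h4
      _ = (γi⁻¹) ^ (1/β) * (pi ^ (1/β) * A) := h5
      _ ≤ γi⁻¹ * (pi ^ (1/β) * A) := mul_le_mul_of_nonneg_right h6 (by positivity)

end RealAux

lemma prod_le_of_cover {n : ℕ} (hn : 1 ≤ n) {K : Set H} {ε : ℝ} (hε : 0 < ε)
    (hcov : HasCover (acx K) n ε)
    (φ e : Fin n → H) (hφ : ∀ k, φ k ∈ K)
    (he : Orthonormal ℝ e) (p : Fin n → ℝ) (hp : ∀ k, 0 < p k)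
    (hdiag : ∀ k, ⟪φ k, e k⟫ = p k)
    (htri : ∀ j k : Fin n, j < k → ⟪φ j, e k⟫ = 0) :
    ∏ k, p k ≤ (Real.sqrt 5 * Real.sqrt n * ε) ^ n := by
  classical
  have hne : Nonempty (Fin n) := ⟨⟨0, by omega⟩⟩
  obtain ⟨q, y, hq, hsub⟩ := hcov
  set T := coordMap (H := H) e with hT
  set M := T.comp (comboMap φ) with hM
  set S := {c : EuclideanSpace ℝ (Fin n) | ∑ k, |c k| ≤ 1} with hS
  have hΓpos : 0 < Real.Gamma ((n:ℝ)/2 + 1) := Real.Gamma_pos_of_pos (by positivity)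
  have hPpos : 0 < ∏ k, p k := Finset.prod_pos fun k _ => hp k
  -- inclusion into the covering balls
  have h1 : M '' S ⊆ ⋃ j : Fin q, Metric.closedBall (T (y j)) ε := by
    rintro - ⟨c, hc, rfl⟩
    have hw : comboMap φ c ∈ acx K := subset_closure ⟨n, c, φ, hφ, hc, rfl⟩
    obtain ⟨j, hj⟩ := Set.mem_iUnion.mp (hsub hw)
    refine Set.mem_iUnion.mpr ⟨j, ?_⟩
    rw [Metric.mem_closedBall] at hj ⊢
    calc dist (M c) (T (y j)) = ‖T (comboMap φ c) - T (y j)‖ := by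
          rw [dist_eq_norm]; rfl
      _ = ‖T (comboMap φ c - y j)‖ := by rw [map_sub]
      _ ≤ ‖comboMap φ c - y j‖ := coordMap_norm_le he _
      _ ≤ ε := by rw [dist_eq_norm] at hj; exact hj
  -- volume of the image of the l1 ball
  have hvol1 : volume (M '' S)
      = ENNReal.ofReal (∏ k, p k) * ENNReal.ofReal (2 ^ n / n.factorial) := by
    rw [MeasureTheory.Measure.addHaar_image_linearMap volume M S, volume_l1ball n hn]
    congr 2
    rw [hM, hT, det_triangular φ e p hdiag htri]
    exact abs_of_pos hPpos
  -- volume of the union of balls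
  have hvol2 : volume (⋃ j : Fin q, Metric.closedBall (T (y j)) ε)
      ≤ ENNReal.ofReal (2 ^ n)
        * (ENNReal.ofReal (ε ^ n) * ENNReal.ofReal (Real.sqrt π ^ n
            / Real.Gamma ((n:ℝ) / 2 + 1))) := by
    calc volume (⋃ j : Fin q, Metric.closedBall (T (y j)) ε)
        ≤ ∑ j : Fin q, volume (Metric.closedBall (T (y j)) ε) :=
          measure_iUnion_fintype_le _ _
      _ = ∑ j : Fin q, (ENNReal.ofReal ε) ^ n * ENNReal.ofReal (Real.sqrt π
            ^ Fintype.card (Fin n) / Real.Gamma ((Fintype.card (Fin n) : ℝ) / 2 + 1)) := by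
          refine Finset.sum_congr rfl fun j _ => ?_
          rw [EuclideanSpace.volume_closedBall (Fin n) (T (y j)) ε, Fintype.card_fin]
      _ = (q : ℝ≥0∞) * ((ENNReal.ofReal ε) ^ n * ENNReal.ofReal (Real.sqrt π ^ n
            / Real.Gamma ((n:ℝ) / 2 + 1))) := by
          rw [Finset.sum_const, Finset.card_univ, Fintype.card_fin, nsmul_eq_mul,
            Fintype.card_fin]
      _ ≤ ENNReal.ofReal (2 ^ n) * (ENNReal.ofReal (ε ^ n)
            * ENNReal.ofReal (Real.sqrt π ^ n / Real.Gamma ((n:ℝ) / 2 + 1))) := by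
          rw [← ENNReal.ofReal_pow hε.le]
          refine mul_le_mul_left ?_ _
          have : ((q : ℝ≥0∞)) ≤ ((2 ^ n : ℕ) : ℝ≥0∞) := by exact_mod_cast hq
          refine this.trans ?_
          rw [ENNReal.ofReal_pow (by norm_num : (0:ℝ) ≤ 2)]
          push_cast
          simp [ENNReal.ofReal_ofNat]
  have hchain := (hvol1 ▸ (measure_mono h1)).trans hvol2
  -- convert to a real inequality
  have hreal : (∏ k, p k) * (2 ^ n / n.factorial)
      ≤ 2 ^ n * (ε ^ n * (Real.sqrt π ^ n / Real.Gamma ((n:ℝ) / 2 + 1))) := by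
    have hnn : (0:ℝ) ≤ 2 ^ n * (ε ^ n * (Real.sqrt π ^ n / Real.Gamma ((n:ℝ) / 2 + 1))) := by
      positivity
    rw [← ENNReal.ofReal_le_ofReal_iff hnn]
    calc ENNReal.ofReal ((∏ k, p k) * (2 ^ n / n.factorial))
        = ENNReal.ofReal (∏ k, p k) * ENNReal.ofReal (2 ^ n / n.factorial) := by
          rw [ENNReal.ofReal_mul hPpos.le]
      _ ≤ ENNReal.ofReal (2 ^ n) * (ENNReal.ofReal (ε ^ n)
            * ENNReal.ofReal (Real.sqrt π ^ n / Real.Gamma ((n:ℝ) / 2 + 1))) := hchain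
      _ = ENNReal.ofReal (2 ^ n * (ε ^ n * (Real.sqrt π ^ n
            / Real.Gamma ((n:ℝ) / 2 + 1)))) := by
          rw [← ENNReal.ofReal_mul (by positivity : (0:ℝ) ≤ ε ^ n),
            ← ENNReal.ofReal_mul (by positivity : (0:ℝ) ≤ (2:ℝ) ^ n)]
  -- real algebra to isolate the product
  have hfpos : (0:ℝ) < n.factorial := by positivity
  have h2pos : (0:ℝ) < (2:ℝ) ^ n := by positivity
  have hP : (∏ k, p k) ≤ ε ^ n * ((n.factorial : ℝ) * Real.sqrt π ^ n
      / Real.Gamma ((n:ℝ) / 2 + 1)) := by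
    have := mul_le_mul_of_nonneg_right hreal
      (le_of_lt (by positivity : (0:ℝ) < (n.factorial : ℝ) / 2 ^ n))
    calc (∏ k, p k) = (∏ k, p k) * (2 ^ n / n.factorial) * ((n.factorial : ℝ) / 2 ^ n) := by
          field_simp
      _ ≤ 2 ^ n * (ε ^ n * (Real.sqrt π ^ n / Real.Gamma ((n:ℝ) / 2 + 1)))
            * ((n.factorial : ℝ) / 2 ^ n) := this
      _ = ε ^ n * ((n.factorial : ℝ) * Real.sqrt π ^ n / Real.Gamma ((n:ℝ) / 2 + 1)) := by
          field_simp
  have hfinal : (n.factorial : ℝ) * Real.sqrt π ^ n / Real.Gamma ((n:ℝ) / 2 + 1)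
      ≤ (Real.sqrt 5 * Real.sqrt n) ^ n := by
    rw [div_le_iff₀ hΓpos]
    exact gamma_ineq n hn
  calc (∏ k, p k) ≤ ε ^ n * ((n.factorial : ℝ) * Real.sqrt π ^ n
        / Real.Gamma ((n:ℝ) / 2 + 1)) := hP
    _ ≤ ε ^ n * (Real.sqrt 5 * Real.sqrt n) ^ n :=
        mul_le_mul_of_nonneg_left hfinal (by positivity)
    _ = (Real.sqrt 5 * Real.sqrt n * ε) ^ n := by rw [← mul_pow, mul_comm]



lemma core_zero {β a P R : ℝ} (hβ : 0 ≤ β) (haP : a ≤ P * R) (ha : 0 ≤ a) (hP : 0 ≤ P)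
    (hR : 0 ≤ R) (h : a ^ β * P ^ (1 - β) ≤ 0) : a = 0 := by
  have h1 : a ^ β * P ^ (1 - β) = 0 :=
    le_antisymm h (mul_nonneg (Real.rpow_nonneg ha _) (Real.rpow_nonneg hP _))
  rcases mul_eq_zero.mp h1 with h2 | h2
  · rcases eq_or_ne β 0 with hb | hb
    · rw [hb, Real.rpow_zero] at h2; norm_num at h2
    · exact ((Real.rpow_eq_zero_iff_of_nonneg ha).mp h2).1
  · rcases eq_or_ne β 1 with hb | hb
    · rw [hb, sub_self, Real.rpow_zero] at h2; norm_num at h2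
    · have hb' : 1 - β ≠ 0 := fun hc => hb (by linarith [sub_eq_zero.mp hc])
      have hPz : P = 0 := ((Real.rpow_eq_zero_iff_of_nonneg hP).mp h2).1
      refine le_antisymm ?_ ha
      calc a ≤ P * R := haP
        _ = 0 := by rw [hPz, zero_mul]

lemma supNorm_le_norm (Φ : Ω → H) (hΦ : ∀ z : Ω, ‖Φ z‖ ≤ 1) [Nonempty Ω] (g : H) :
    supNorm Φ g ≤ ‖g‖ := by
  refine supNorm_le Φ hΦ g fun z => ?_
  calc |⟪g, Φ z⟫| ≤ ‖g‖ * ‖Φ z‖ := abs_real_inner_le_norm _ _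
    _ ≤ ‖g‖ * 1 := by nlinarith [norm_nonneg g, hΦ z]
    _ = ‖g‖ := mul_one _

lemma supNorm_nonpos_of_powerFun_eq_zero [Nonempty Ω] (Φ : Ω → H)
    (hΦ : ∀ z : Ω, ‖Φ z‖ ≤ 1) {β : ℝ} (hβ : 0 ≤ β) {γi : ℝ} (hγ0 : 0 < γi)
    (f : H) (x : ℕ → Ω) (i : ℕ)
    (hxi : ∀ z : Ω,
      γi * |⟪f - interp Φ (Xset x i) f, Φ z⟫| ^ β * powerFun Φ (Xset x i) z ^ (1 - β)
        ≤ |⟪f - interp Φ (Xset x i) f, Φ (x (i + 1))⟫| ^ β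
            * powerFun Φ (Xset x i) (x (i + 1)) ^ (1 - β))
    (hp0 : powerFun Φ (Xset x i) (x (i + 1)) = 0) :
    supNorm Φ (f - interp Φ (Xset x i) f) ≤ 0 := by
  refine supNorm_le Φ hΦ _ fun z => ?_
  have hri : |⟪f - interp Φ (Xset x i) f, Φ (x (i + 1))⟫| = 0 := by
    have h := abs_resid_apply_le Φ (Xset x i) f (x (i + 1))
    rw [hp0, zero_mul] at h
    exact le_antisymm h (abs_nonneg _)
  have hRHS : |⟪f - interp Φ (Xset x i) f, Φ (x (i + 1))⟫| ^ β
      * powerFun Φ (Xset x i) (x (i + 1)) ^ (1 - β) = 0 := by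
    rcases eq_or_ne β 0 with hb | hb
    · rw [hb, sub_zero, hp0, Real.rpow_one, mul_zero]
    · rw [hri, Real.zero_rpow hb, zero_mul]
  have hz := hxi z
  rw [hRHS] at hz
  have hfac : |⟪f - interp Φ (Xset x i) f, Φ z⟫| ^ β * powerFun Φ (Xset x i) z ^ (1 - β) ≤ 0 := by
    nlinarith [mul_nonneg (Real.rpow_nonneg (abs_nonneg ⟪f - interp Φ (Xset x i) f, Φ z⟫) β)
      (Real.rpow_nonneg (powerFun_nonneg Φ (Xset x i) z) (1 - β)), hγ0]
  have := core_zero hβ (abs_resid_apply_le Φ (Xset x i) f z) (abs_nonneg _)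
    (powerFun_nonneg Φ (Xset x i) z) (norm_nonneg _) hfac
  exact this.le

theorem statement_9 [Nonempty Ω]
    (Φ : Ω → H) (hΦ : ∀ z : Ω, ‖Φ z‖ ≤ 1)
    (β : ℝ) (hβ : 0 ≤ β) (γ : ℕ → ℝ) (hγ0 : ∀ i, 0 < γ i) (hγ1 : ∀ i, γ i ≤ 1)
    (f : H) (x : ℕ → Ω)
    (hx : ∀ (i : ℕ) (z : Ω),
      γ i * |⟪f - interp Φ (Xset x i) f, Φ z⟫| ^ β * powerFun Φ (Xset x i) z ^ (1 - β)
        ≤ |⟪f - interp Φ (Xset x i) f, Φ (x (i + 1))⟫| ^ β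
            * powerFun Φ (Xset x i) (x (i + 1)) ^ (1 - β))
    (n : ℕ) (hn : 1 ≤ n) (ε : ℝ) (hε : 0 < ε)
    (hcov : HasCover (acx (Set.range Φ)) n ε) :
    (Finset.Icc (n + 1) (2 * n)).inf' (Finset.nonempty_Icc.mpr (by omega))
        (fun i => supNorm Φ (f - interp Φ (Xset x i) f))
      ≤ ((∏ i ∈ Finset.Icc (n + 1) (2 * n), γ i) ^ (1 / (n : ℝ)))⁻¹
          * (Real.sqrt 5 * (n : ℝ) ^ ((1 - β) / 2) * ε) ^ (1 / max 1 β)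
          * ‖f - interp Φ (Xset x (n + 1)) f‖ := by
  classical
  have hIne : (Finset.Icc (n + 1) (2 * n)).Nonempty := Finset.nonempty_Icc.mpr (by omega)
  set μ : ℝ := max 1 β with hμdef
  have hμ1 : (1:ℝ) ≤ μ := le_max_left _ _
  have hμ0 : (0:ℝ) < μ := lt_of_lt_of_le one_pos hμ1
  have hn0 : (0:ℝ) < (n:ℝ) := by exact_mod_cast hn
  set R : ℝ := ‖f - interp Φ (Xset x (n + 1)) f‖ with hRdef
  have hR0 : (0:ℝ) ≤ R := norm_nonneg _
  set G : ℝ := ∏ i ∈ Finset.Icc (n + 1) (2 * n), γ i with hGdef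
  have hG0 : 0 < G := Finset.prod_pos fun i _ => hγ0 i
  set L : ℝ := (Finset.Icc (n + 1) (2 * n)).inf' hIne
    (fun i => supNorm Φ (f - interp Φ (Xset x i) f)) with hLdef
  show L ≤ (G ^ (1 / (n:ℝ)))⁻¹ * (Real.sqrt 5 * (n : ℝ) ^ ((1 - β) / 2) * ε) ^ (1 / μ) * R
  have hLle : ∀ i ∈ Finset.Icc (n + 1) (2 * n),
      L ≤ supNorm Φ (f - interp Φ (Xset x i) f) := fun i hi => Finset.inf'_le _ hi
  -- trivial case: some sup-norm on the index window vanishes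
  by_cases htriv : ∃ i ∈ Finset.Icc (n + 1) (2 * n), supNorm Φ (f - interp Φ (Xset x i) f) ≤ 0
  · obtain ⟨i, hiI, hzero⟩ := htriv
    refine le_trans (le_trans (hLle i hiI) hzero) (by positivity)
  push_neg at htriv
  -- hence R > 0
  have hRpos : 0 < R := by
    have h1 := htriv (n + 1) (by rw [Finset.mem_Icc]; omega)
    exact lt_of_lt_of_le h1 (by rw [hRdef]; exact supNorm_le_norm Φ hΦ _)
  -- and all power function values are positive
  have hppos : ∀ k : Fin n,
      0 < powerFun Φ (Xset x (n + 1 + (k:ℕ))) (x (n + 1 + (k:ℕ) + 1)) := by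
    intro k
    rcases (powerFun_nonneg Φ (Xset x (n + 1 + (k:ℕ))) (x (n + 1 + (k:ℕ) + 1))).lt_or_eq
      with h | h
    · exact h
    · exfalso
      have hk := k.isLt
      have hmem : n + 1 + (k:ℕ) ∈ Finset.Icc (n + 1) (2 * n) := by
        rw [Finset.mem_Icc]; omega
      have := supNorm_nonpos_of_powerFun_eq_zero Φ hΦ hβ (hγ0 (n + 1 + (k:ℕ))) f x
        (n + 1 + (k:ℕ)) (hx (n + 1 + (k:ℕ))) h.symm
      exact absurd this (not_le.mpr (htriv _ hmem))
  -- the greedy points and the orthonormal directions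
  set φv : Fin n → H := fun k => Φ (x (n + 1 + (k:ℕ) + 1)) with hφdef
  set p : Fin n → ℝ :=
    fun k => powerFun Φ (Xset x (n + 1 + (k:ℕ))) (x (n + 1 + (k:ℕ) + 1)) with hpdef
  set ev : Fin n → H := fun k =>
    (p k)⁻¹ • (φv k - interp Φ (Xset x (n + 1 + (k:ℕ))) (φv k)) with hedef
  have hpnorm : ∀ k : Fin n, ‖φv k - interp Φ (Xset x (n + 1 + (k:ℕ))) (φv k)‖ = p k :=
    fun k => rfl
  have heV : ∀ (k : Fin n) (v : H), v ∈ Vsub Φ (Xset x (n + 1 + (k:ℕ))) → ⟪ev k, v⟫ = 0 := by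
    intro k v hv
    rw [hedef]
    simp only [real_inner_smul_left]
    rw [resid_inner_eq_zero Φ (Xset x (n + 1 + (k:ℕ))) (φv k) hv, mul_zero]
  have hevmem : ∀ k l : Fin n, (k:ℕ) < (l:ℕ) → ev k ∈ Vsub Φ (Xset x (n + 1 + (l:ℕ))) := by
    intro k l hkl
    rw [hedef]
    refine Submodule.smul_mem _ _ (Submodule.sub_mem _ ?_ ?_)
    · exact Phi_mem_Vsub Φ (mem_Xset x (by omega) (by omega))
    · exact Vsub_mono Φ (Xset_mono x (by omega)) (interp_mem Φ _ (φv k))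
  have hφdecomp : ∀ k : Fin n,
      φv k = interp Φ (Xset x (n + 1 + (k:ℕ))) (φv k) + p k • ev k := by
    intro k
    rw [hedef, smul_inv_smul₀ (hppos k).ne']
    abel
  have henorm : ∀ k : Fin n, ‖ev k‖ = 1 := by
    intro k
    rw [hedef, norm_smul, hpnorm k, norm_inv, Real.norm_eq_abs,
      abs_of_pos (hppos k), inv_mul_cancel₀ (hppos k).ne']
  have honb : Orthonormal ℝ ev := by
    rw [orthonormal_iff_ite]
    intro k l
    rcases eq_or_ne k l with hkl | hkl
    · subst hkl
      rw [if_pos rfl, real_inner_self_eq_norm_mul_norm, henorm k, mul_one]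
    · rw [if_neg hkl]
      rcases lt_or_gt_of_ne (fun hc : (k:ℕ) = (l:ℕ) => hkl (Fin.ext hc)) with h | h
      · rw [real_inner_comm]
        exact heV l (ev k) (hevmem k l h)
      · exact heV k (ev l) (hevmem l k h)
  have hdiagv : ∀ k : Fin n, ⟪φv k, ev k⟫ = p k := by
    intro k
    nth_rewrite 1 [hφdecomp k]
    rw [inner_add_left, real_inner_smul_left, real_inner_self_eq_norm_mul_norm, henorm k,
      real_inner_comm, heV k _ (interp_mem Φ _ (φv k))]
    ring
  have htriv2 : ∀ j k : Fin n, j < k → ⟪φv j, ev k⟫ = 0 := by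
    intro j k hjk
    rw [real_inner_comm]
    exact heV k (φv j) (Phi_mem_Vsub Φ (mem_Xset x (by omega) (by
      have := (Fin.lt_iff_val_lt_val.mp hjk); omega)))
  have hProd : ∏ k, p k ≤ (Real.sqrt 5 * Real.sqrt n * ε) ^ n :=
    prod_le_of_cover hn hε hcov φv ev (fun k => Set.mem_range_self _) honb p hppos hdiagv htriv2
  -- Bessel coefficients
  set a : Fin n → ℝ := fun k => ⟪f - interp Φ (Xset x (n + 1)) f, ev k⟫ with hadef
  have hBessel : ∑ k, (a k) ^ 2 ≤ R ^ 2 := by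
    have h := honb.sum_inner_products_le (𝕜 := ℝ) (s := Finset.univ)
      (f - interp Φ (Xset x (n + 1)) f)
    calc ∑ k, (a k) ^ 2
        = ∑ k : Fin n, ‖⟪ev k, f - interp Φ (Xset x (n + 1)) f⟫‖ ^ 2 := by
          refine Finset.sum_congr rfl fun k _ => ?_
          rw [hadef, Real.norm_eq_abs, sq_abs, real_inner_comm]
      _ ≤ ‖f - interp Φ (Xset x (n + 1)) f‖ ^ 2 := h
      _ = R ^ 2 := by rw [hRdef]
  have hre : ∀ k : Fin n, ⟪f - interp Φ (Xset x (n + 1 + (k:ℕ))) f, ev k⟫ = a k := by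
    intro k
    have hmem : interp Φ (Xset x (n + 1)) f - interp Φ (Xset x (n + 1 + (k:ℕ))) f
        ∈ Vsub Φ (Xset x (n + 1 + (k:ℕ))) :=
      Submodule.sub_mem _ (Vsub_mono Φ (Xset_mono x (by omega)) (interp_mem Φ _ f))
        (interp_mem Φ _ f)
    have hdiff : (f - interp Φ (Xset x (n + 1 + (k:ℕ))) f) - (f - interp Φ (Xset x (n + 1)) f)
        = interp Φ (Xset x (n + 1)) f - interp Φ (Xset x (n + 1 + (k:ℕ))) f := by abel
    have h0 : ⟪ev k, (f - interp Φ (Xset x (n + 1 + (k:ℕ))) f)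
        - (f - interp Φ (Xset x (n + 1)) f)⟫ = 0 := by
      rw [hdiff]; exact heV k _ hmem
    rw [real_inner_comm] at h0
    rw [inner_sub_left] at h0
    rw [hadef]
    linarith [h0]
  have hkey : ∀ k : Fin n,
      |⟪f - interp Φ (Xset x (n + 1 + (k:ℕ))) f, Φ (x (n + 1 + (k:ℕ) + 1))⟫|
        = p k * |a k| := by
    intro k
    have heq : ⟪f - interp Φ (Xset x (n + 1 + (k:ℕ))) f, Φ (x (n + 1 + (k:ℕ) + 1))⟫
        = p k * a k := by
      show ⟪f - interp Φ (Xset x (n + 1 + (k:ℕ))) f, φv k⟫ = p k * a k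
      nth_rewrite 1 [hφdecomp k]
      rw [inner_add_right, real_inner_smul_right,
        resid_inner_eq_zero Φ _ f (interp_mem Φ _ (φv k)), hre k, zero_add]
    rw [heq, abs_mul, abs_of_pos (hppos k)]
  -- the per-step bound
  have hstep : ∀ k : Fin n, supNorm Φ (f - interp Φ (Xset x (n + 1 + (k:ℕ))) f)
      ≤ (γ (n + 1 + (k:ℕ)))⁻¹
          * (p k ^ (1 / μ) * (|a k| ^ (β / μ) * R ^ (1 - β / μ))) := by
    intro k
    refine supNorm_le Φ hΦ _ fun z => ?_
    have h := hx (n + 1 + (k:ℕ)) z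
    rw [hkey k] at h
    exact core_step hβ (hγ0 _) (hγ1 _) (abs_nonneg _) (powerFun_le_one Φ hΦ _ z)
      (abs_resid_apply_le Φ _ f z) (norm_nonneg _)
      (resid_norm_anti Φ x f (by omega : n + 1 ≤ n + 1 + (k:ℕ))) (abs_nonneg _) (hppos k) h
  -- aggregation via geometric means
  have hm0 : ∀ k : Fin n, (0:ℝ) ≤ supNorm Φ (f - interp Φ (Xset x (n + 1 + (k:ℕ))) f) :=
    fun k => supNorm_nonneg Φ hΦ _
  have hL0 : 0 ≤ L := by
    rw [hLdef]
    exact Finset.le_inf' hIne _ fun i hi => supNorm_nonneg Φ hΦ _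
  have hLm : ∀ k : Fin n, L ≤ supNorm Φ (f - interp Φ (Xset x (n + 1 + (k:ℕ))) f) := by
    intro k
    have hk := k.isLt
    exact hLle _ (by rw [Finset.mem_Icc]; omega)
  have hLn : L ^ n ≤ ∏ k : Fin n, supNorm Φ (f - interp Φ (Xset x (n + 1 + (k:ℕ))) f) := by
    calc L ^ n = ∏ _k : Fin n, L := by
          rw [Finset.prod_const, Finset.card_univ, Fintype.card_fin]
      _ ≤ _ := Finset.prod_le_prod (fun _ _ => hL0) (fun k _ => hLm k)
  have hIm : Finset.Icc (n + 1) (2 * n) = (Finset.range n).image (fun k => n + 1 + k) := by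
    ext i
    simp only [Finset.mem_Icc, Finset.mem_image, Finset.mem_range]
    constructor
    · intro h; exact ⟨i - (n + 1), by omega, by omega⟩
    · rintro ⟨k, hk, rfl⟩; omega
  have hGre : ∏ k : Fin n, γ (n + 1 + (k:ℕ)) = G := by
    rw [hGdef, hIm, Finset.prod_image (fun a _ b _ h => by omega)]
    exact Fin.prod_univ_eq_prod_range (fun i => γ (n + 1 + i)) n
  set Pp : ℝ := ∏ k, p k with hPpdef
  set Aa : ℝ := ∏ k, |a k| with hAadef
  have hPp0 : (0:ℝ) ≤ Pp := Finset.prod_nonneg fun k _ => (hppos k).le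
  have hAa0 : (0:ℝ) ≤ Aa := Finset.prod_nonneg fun k _ => abs_nonneg _
  have hprodle : ∏ k : Fin n, supNorm Φ (f - interp Φ (Xset x (n + 1 + (k:ℕ))) f)
      ≤ G⁻¹ * (Pp ^ (1 / μ) * (Aa ^ (β / μ) * (R ^ (1 - β / μ)) ^ n)) := by
    calc ∏ k : Fin n, supNorm Φ (f - interp Φ (Xset x (n + 1 + (k:ℕ))) f)
        ≤ ∏ k : Fin n, (γ (n + 1 + (k:ℕ)))⁻¹
            * (p k ^ (1 / μ) * (|a k| ^ (β / μ) * R ^ (1 - β / μ))) :=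
          Finset.prod_le_prod (fun k _ => hm0 k) (fun k _ => hstep k)
      _ = (∏ k : Fin n, (γ (n + 1 + (k:ℕ)))⁻¹) * ((∏ k : Fin n, p k ^ (1 / μ))
            * ((∏ k : Fin n, |a k| ^ (β / μ)) * (∏ _k : Fin n, R ^ (1 - β / μ)))) := by
          rw [Finset.prod_mul_distrib, Finset.prod_mul_distrib, Finset.prod_mul_distrib]
      _ = G⁻¹ * (Pp ^ (1 / μ) * (Aa ^ (β / μ) * (R ^ (1 - β / μ)) ^ n)) := by
          rw [Finset.prod_inv_distrib, hGre,
            Real.finset_prod_rpow _ _ (fun k _ => (hppos k).le) _,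
            Real.finset_prod_rpow _ _ (fun k _ => abs_nonneg _) _,
            Finset.prod_const, Finset.card_univ, Fintype.card_fin]
  have hL1 : L ≤ (G⁻¹ * (Pp ^ (1 / μ) * (Aa ^ (β / μ) * (R ^ (1 - β / μ)) ^ n))) ^ (1 / (n:ℝ)) := by
    have h1 : L = (L ^ n) ^ (1 / (n:ℝ)) := by
      rw [← Real.rpow_natCast L n, ← Real.rpow_mul hL0, mul_one_div,
        div_self (ne_of_gt hn0), Real.rpow_one]
    rw [h1]
    exact Real.rpow_le_rpow (by positivity) (hLn.trans hprodle) (by positivity)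
  have hsplit : (G⁻¹ * (Pp ^ (1 / μ) * (Aa ^ (β / μ) * (R ^ (1 - β / μ)) ^ n))) ^ (1 / (n:ℝ))
      = (G ^ (1 / (n:ℝ)))⁻¹ * ((Pp ^ (1 / μ)) ^ (1 / (n:ℝ))
          * ((Aa ^ (β / μ)) ^ (1 / (n:ℝ)) * ((R ^ (1 - β / μ)) ^ n) ^ (1 / (n:ℝ)))) := by
    rw [Real.mul_rpow (by positivity) (by positivity),
      Real.mul_rpow (by positivity) (by positivity),
      Real.mul_rpow (by positivity) (by positivity),
      Real.inv_rpow hG0.le]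
  have ht4 : ((R ^ (1 - β / μ)) ^ n) ^ (1 / (n:ℝ)) = R ^ (1 - β / μ) := by
    rw [← Real.rpow_natCast (R ^ (1 - β / μ)) n, ← Real.rpow_mul (by positivity), mul_one_div,
      div_self (ne_of_gt hn0), Real.rpow_one]
  have ht2 : (Pp ^ (1 / μ)) ^ (1 / (n:ℝ)) ≤ (Real.sqrt 5 * Real.sqrt n * ε) ^ (1 / μ) := by
    have hD0 : (0:ℝ) ≤ Real.sqrt 5 * Real.sqrt n * ε := by positivity
    calc (Pp ^ (1 / μ)) ^ (1 / (n:ℝ)) = Pp ^ ((1 / μ) * (1 / (n:ℝ))) := by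
          rw [← Real.rpow_mul hPp0]
      _ ≤ ((Real.sqrt 5 * Real.sqrt n * ε) ^ n) ^ ((1 / μ) * (1 / (n:ℝ))) :=
          Real.rpow_le_rpow hPp0 hProd (by positivity)
      _ = (Real.sqrt 5 * Real.sqrt n * ε) ^ (1 / μ) := by
          rw [← Real.rpow_natCast _ n, ← Real.rpow_mul hD0]
          congr 1
          field_simp
  have hGM : (∏ k : Fin n, (a k) ^ 2) ^ (1 / (n:ℝ)) ≤ R ^ 2 / n := by
    have hgm := Real.geom_mean_le_arith_mean_weighted Finset.univ (fun _ : Fin n => 1 / (n:ℝ))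
      (fun k => (a k) ^ 2) (fun _ _ => by positivity)
      (by rw [Finset.sum_const, Finset.card_univ, Fintype.card_fin, nsmul_eq_mul, mul_one_div,
        div_self (ne_of_gt hn0)])
      (fun k _ => sq_nonneg _)
    calc (∏ k : Fin n, (a k) ^ 2) ^ (1 / (n:ℝ))
        = ∏ k : Fin n, ((a k) ^ 2) ^ (1 / (n:ℝ)) :=
          (Real.finset_prod_rpow _ _ (fun k _ => sq_nonneg _) _).symm
      _ ≤ ∑ k : Fin n, (1 / (n:ℝ)) * (a k) ^ 2 := hgm
      _ = (∑ k : Fin n, (a k) ^ 2) / n := by rw [← Finset.mul_sum]; ring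
      _ ≤ R ^ 2 / n := by gcongr
  have hAasq : ∏ k : Fin n, (a k) ^ 2 = Aa ^ 2 := by
    rw [hAadef, ← Finset.prod_pow]
    exact Finset.prod_congr rfl fun k _ => (sq_abs (a k)).symm
  have ht3 : (Aa ^ (β / μ)) ^ (1 / (n:ℝ)) ≤ (R / Real.sqrt n) ^ (β / μ) := by
    calc (Aa ^ (β / μ)) ^ (1 / (n:ℝ)) = (Aa ^ 2) ^ ((1 / (n:ℝ)) * (β / (2 * μ))) := by
          rw [← Real.rpow_natCast Aa 2, ← Real.rpow_mul hAa0, ← Real.rpow_mul hAa0]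
          congr 1
          push_cast
          field_simp
      _ = ((Aa ^ 2) ^ (1 / (n:ℝ))) ^ (β / (2 * μ)) := Real.rpow_mul (by positivity) _ _
      _ ≤ (R ^ 2 / (n:ℝ)) ^ (β / (2 * μ)) :=
          Real.rpow_le_rpow (by positivity) (hAasq ▸ hGM) (by positivity)
      _ = (R / Real.sqrt n) ^ (β / μ) := by
          have hh : R ^ 2 / (n:ℝ) = (R / Real.sqrt n) ^ 2 := by
            rw [div_pow, Real.sq_sqrt hn0.le]
          rw [hh, ← Real.rpow_natCast (R / Real.sqrt n) 2, ← Real.rpow_mul (by positivity)]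
          congr 1
          push_cast
          field_simp
  have hfinalineq : (G ^ (1 / (n:ℝ)))⁻¹ * ((Pp ^ (1 / μ)) ^ (1 / (n:ℝ))
      * ((Aa ^ (β / μ)) ^ (1 / (n:ℝ)) * ((R ^ (1 - β / μ)) ^ n) ^ (1 / (n:ℝ))))
      ≤ (G ^ (1 / (n:ℝ)))⁻¹ * ((Real.sqrt 5 * Real.sqrt n * ε) ^ (1 / μ)
          * ((R / Real.sqrt n) ^ (β / μ) * R ^ (1 - β / μ))) := by
    rw [ht4]
    refine mul_le_mul_of_nonneg_left ?_ (by positivity)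
    exact mul_le_mul ht2 (mul_le_mul_of_nonneg_right ht3 (by positivity)) (by positivity)
      (by positivity)
  have hsn : 0 < Real.sqrt (n:ℝ) := Real.sqrt_pos.mpr hn0
  have h1 : (R / Real.sqrt n) ^ (β / μ) * R ^ (1 - β / μ)
      = R * ((Real.sqrt (n:ℝ)) ^ (β / μ))⁻¹ := by
    rw [Real.div_rpow hR0 hsn.le, div_mul_eq_mul_div, ← Real.rpow_add hRpos]
    have he : β / μ + (1 - β / μ) = 1 := by ring
    rw [he, Real.rpow_one, div_eq_mul_inv]
  have h3 : (Real.sqrt (n:ℝ)) ^ (1 / μ) * ((Real.sqrt (n:ℝ)) ^ (β / μ))⁻¹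
      = ((n:ℝ) ^ ((1 - β) / 2)) ^ (1 / μ) := by
    rw [← div_eq_mul_inv, ← Real.rpow_sub hsn, Real.sqrt_eq_rpow, ← Real.rpow_mul hn0.le,
      ← Real.rpow_mul hn0.le]
    congr 1
    ring
  have hEQ : (Real.sqrt 5 * Real.sqrt n * ε) ^ (1 / μ)
      * ((R / Real.sqrt n) ^ (β / μ) * R ^ (1 - β / μ))
      = (Real.sqrt 5 * (n:ℝ) ^ ((1 - β) / 2) * ε) ^ (1 / μ) * R := by
    rw [h1, Real.mul_rpow (by positivity) hε.le, Real.mul_rpow (by positivity) hsn.le,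
      Real.mul_rpow (by positivity) hε.le, Real.mul_rpow (by positivity) (by positivity),
      ← h3]
    ring
  calc L ≤ (G⁻¹ * (Pp ^ (1 / μ) * (Aa ^ (β / μ) * (R ^ (1 - β / μ)) ^ n))) ^ (1 / (n:ℝ)) := hL1
    _ = (G ^ (1 / (n:ℝ)))⁻¹ * ((Pp ^ (1 / μ)) ^ (1 / (n:ℝ))
          * ((Aa ^ (β / μ)) ^ (1 / (n:ℝ)) * ((R ^ (1 - β / μ)) ^ n) ^ (1 / (n:ℝ)))) := hsplit
    _ ≤ (G ^ (1 / (n:ℝ)))⁻¹ * ((Real.sqrt 5 * Real.sqrt n * ε) ^ (1 / μ)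
          * ((R / Real.sqrt n) ^ (β / μ) * R ^ (1 - β / μ))) := hfinalineq
    _ = (G ^ (1 / (n:ℝ)))⁻¹ * (Real.sqrt 5 * (n:ℝ) ^ ((1 - β) / 2) * ε) ^ (1 / μ) * R := by
        rw [hEQ]; ring
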